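/- Let m be even, u = (u_1,...,u_m) an m-tuple of starting vertices and v an m-tuple of ending vertices in an acyclic digraph D, with u D-compatible with v. Then for every permutation π ∈ S_m other than the identity, there is no non-intersecting m-tuple of paths (P_1,...,P_m) with P_k a path from u_{π(k)} to v_k; i.e., F^0(u^π, v) = 0 unless π = id. -/

import Mathlib

open scoped Classical

noncomputable section

variable {V R : Type*}

/-- A directed path in the digraph with edge relation `E`, from `u` to `v`,
recorded as its list of vertices. -/
def IsPathList (E : V → V → Prop) (u v : V) (p : List V) : Prop :=
  p.Chain' E ∧ p.head? = some u ∧ p.getLast? = some v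

/-- The weight of a path: the product of the weights of its edges. -/
def pathWeight [CommRing R] (w : V → V → R) (p : List V) : R :=
  ((p.zip p.tail).map fun q => w q.1 q.2).prod

/-- `h(u,v)`: the sum of the weights of all directed paths from `u` to `v`. -/
def pathGF [CommRing R] (E : V → V → Prop) (w : V → V → R) (u v : V) : R :=
  ∑ᶠ p ∈ {p : List V | IsPathList E u v p}, pathWeight w p

/-- An `n`-tuple of paths is non-intersecting if its components share no vertex pairwise. -/
def NonIntersecting {n : ℕ} (P : Fin n → List V) : Prop :=
  ∀ i j, i ≠ j → (P i).Disjoint (P j)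

/-- `F⁰(u,v)`: the sum of the weights of all non-intersecting `n`-tuples of paths,
the `i`-th path running from `u i` to `v i`. -/
def F0 [CommRing R] {n : ℕ} (E : V → V → Prop) (w : V → V → R)
    (u v : Fin n → V) : R :=
  ∑ᶠ P ∈ {P : Fin n → List V |
      (∀ i, IsPathList E (u i) (v i) (P i)) ∧ NonIntersecting P},
    ∏ i, pathWeight w (P i)

/-- The digraph is acyclic: any directed path from a vertex to itself is trivial. -/
def Acyclic (E : V → V → Prop) : Prop :=
  ∀ (v : V) (p : List V), IsPathList E v v p → p.length ≤ 1
/-- `u` is `D`-compatible with `v`. -/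
def DCompatible {m n : ℕ} (E : V → V → Prop) (u : Fin m → V) (v : Fin n → V) : Prop :=
  ∀ (i j : Fin m) (k l : Fin n), i < j → k < l →
    ∀ p q : List V, IsPathList E (u i) (v l) p → IsPathList E (u j) (v k) q →
      ¬ p.Disjoint q

/-- If `u` is `D`-compatible with `v` and `π ≠ id`, there is no non-intersecting
family of paths joining `u_{π(k)}` to `v_k`; in particular `F⁰(uᵖⁱ, v) = 0`. -/
theorem no_nonintersecting_of_ne_id [CommRing R] {m : ℕ} (hm : Even m)
    (E : V → V → Prop) (w : V → V → R) (u v : Fin m → V)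
    (hcomp : DCompatible E u v) (π : Equiv.Perm (Fin m)) (hπ : π ≠ 1) :
    {P : Fin m → List V |
        (∀ i, IsPathList E (u (π i)) (v i) (P i)) ∧ NonIntersecting P} = ∅ ∧
    F0 E w (fun i => u (π i)) v = 0 := by
  have hinv : ∃ a b : Fin m, a < b ∧ π b < π a := by
    by_contra h
    push_neg at h
    have hs : StrictMono π := by
      intro a b hab
      rcases lt_or_eq_of_le (h a b hab) with h' | h'
      · exact h'
      · exact absurd (π.injective h') hab.ne
    apply hπ
    have : (π : Fin m → Fin m) = id := by
      refine (StrictMono.range_inj hs strictMono_id).1 ?_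
      simp [Set.range_eq_univ.2 π.surjective]
    exact Equiv.ext fun i => congrFun this i
  obtain ⟨a, b, hab, hba⟩ := hinv
  have hempty : {P : Fin m → List V |
      (∀ i, IsPathList E (u (π i)) (v i) (P i)) ∧ NonIntersecting P} = ∅ := by
    ext P
    simp only [Set.mem_setOf_eq, Set.mem_empty_iff_false, iff_false]
    rintro ⟨hP, hNI⟩
    exact hcomp (π b) (π a) a b hba hab (P b) (P a) (hP b) (hP a)
      (hNI b a (fun h => hab.ne (h.symm)))
  refine ⟨hempty, ?_⟩
  unfold F0
  rw [hempty, finsum_mem_empty]
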